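/- For every m ∈ (0,1), the function μ(m) = E(m)/K(m) is differentiable at m and satisfies the Riccati equation μ'(m) = (μ(m)² + 2(m−1)·μ(m) − (m−1)) / (2m(m−1)). -/

import Mathlib

open Real

/-- Complete elliptic integral of the second kind with parameter `m`. -/
noncomputable def ellipticE (m : ℝ) : ℝ :=
  ∫ y in (0:ℝ)..(π / 2), Real.sqrt (1 - m * Real.sin y ^ 2)

/-- Complete elliptic integral of the first kind with parameter `m`. -/
noncomputable def ellipticK (m : ℝ) : ℝ :=
  ∫ y in (0:ℝ)..(π / 2), 1 / Real.sqrt (1 - m * Real.sin y ^ 2)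

open MeasureTheory intervalIntegral

namespace MuRiccatiAux
variable {m : ℝ}

lemma w_lb (hm0 : 0 < m) (hm1 : m < 1) {s : ℝ} (hs : s ≤ (1+m)/2) (y : ℝ) :
    (1 - m)/2 ≤ 1 - s * Real.sin y ^ 2 := by
  have h0 : (0:ℝ) ≤ Real.sin y ^ 2 := sq_nonneg _
  have h1 : Real.sin y ^ 2 ≤ 1 := Real.sin_sq_le_one y
  rcases le_or_gt s 0 with h | h
  · nlinarith
  · nlinarith [mul_le_mul_of_nonneg_right hs h0]

lemma w_pos (hm0 : 0 < m) (hm1 : m < 1) {s : ℝ} (hs : s ≤ (1+m)/2) (y : ℝ) :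
    0 < 1 - s * Real.sin y ^ 2 :=
  lt_of_lt_of_le (by linarith) (w_lb hm0 hm1 hs y)

lemma contW (s : ℝ) : Continuous fun y => 1 - s * Real.sin y ^ 2 := by
  fun_prop

lemma contSqrt (s : ℝ) : Continuous fun y => Real.sqrt (1 - s * Real.sin y ^ 2) :=
  Real.continuous_sqrt.comp (contW s)

lemma contInv {s : ℝ} (hpos : ∀ y, 0 < 1 - s * Real.sin y ^ 2) :
    Continuous fun y => 1 / Real.sqrt (1 - s * Real.sin y ^ 2) :=
  continuous_const.div (contSqrt s) fun y => (Real.sqrt_pos.2 (hpos y)).ne'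

lemma contInv3 {s : ℝ} (hpos : ∀ y, 0 < 1 - s * Real.sin y ^ 2) :
    Continuous fun y => 1 / ((1 - s * Real.sin y ^ 2) * Real.sqrt (1 - s * Real.sin y ^ 2)) :=
  continuous_const.div ((contW s).mul (contSqrt s))
    fun y => (mul_pos (hpos y) (Real.sqrt_pos.2 (hpos y))).ne'

lemma contDE {s : ℝ} (hpos : ∀ y, 0 < 1 - s * Real.sin y ^ 2) :
    Continuous fun y => -(Real.sin y ^ 2) / (2 * Real.sqrt (1 - s * Real.sin y ^ 2)) := by
  apply Continuous.div
  · fun_prop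
  · exact continuous_const.mul (contSqrt s)
  · intro y; have := hpos y; positivity

lemma contDK {s : ℝ} (hpos : ∀ y, 0 < 1 - s * Real.sin y ^ 2) :
    Continuous fun y =>
      Real.sin y ^ 2 / (2 * ((1 - s * Real.sin y ^ 2) * Real.sqrt (1 - s * Real.sin y ^ 2))) := by
  apply Continuous.div
  · fun_prop
  · exact continuous_const.mul ((contW s).mul (contSqrt s))
  · intro y; have := hpos y; positivity

lemma hasDerivE (y : ℝ) {s : ℝ} (hw : 0 < 1 - s * Real.sin y ^ 2) :
    HasDerivAt (fun s => Real.sqrt (1 - s * Real.sin y ^ 2))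
      (-(Real.sin y ^ 2) / (2 * Real.sqrt (1 - s * Real.sin y ^ 2))) s := by
  have h1 : HasDerivAt (fun s : ℝ => 1 - s * Real.sin y ^ 2) (-(Real.sin y ^ 2)) s := by
    simpa using ((hasDerivAt_id s).mul_const (Real.sin y ^ 2)).const_sub 1
  have h2 := (Real.hasDerivAt_sqrt (ne_of_gt hw)).comp s h1
  refine h2.congr_deriv ?_
  ring

lemma hasDerivK (y : ℝ) {s : ℝ} (hw : 0 < 1 - s * Real.sin y ^ 2) :
    HasDerivAt (fun s => 1 / Real.sqrt (1 - s * Real.sin y ^ 2))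
      (Real.sin y ^ 2 /
        (2 * ((1 - s * Real.sin y ^ 2) * Real.sqrt (1 - s * Real.sin y ^ 2)))) s := by
  have hs := hasDerivE y hw
  have hne : Real.sqrt (1 - s * Real.sin y ^ 2) ≠ 0 := ne_of_gt (Real.sqrt_pos.2 hw)
  have h := (hasDerivAt_const s (1:ℝ)).div hs hne
  refine h.congr_deriv ?_
  have hsq : Real.sqrt (1 - s * Real.sin y ^ 2) * Real.sqrt (1 - s * Real.sin y ^ 2)
      = 1 - s * Real.sin y ^ 2 := Real.mul_self_sqrt hw.le
  rw [Real.sq_sqrt hw.le]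
  field_simp
  ring

lemma ball_mem_le (hm1 : m < 1) {s : ℝ} (hs : s ∈ Metric.ball m ((1-m)/2)) : s ≤ (1+m)/2 := by
  rw [Metric.mem_ball, Real.dist_eq, abs_lt] at hs
  linarith [hs.2]

set_option maxHeartbeats 1000000 in
lemma ellipticE_hasDeriv (hm : m ∈ Set.Ioo (0:ℝ) 1) :
    HasDerivAt ellipticE
      (∫ y in (0:ℝ)..(π/2), -(Real.sin y ^ 2) / (2 * Real.sqrt (1 - m * Real.sin y ^ 2))) m := by
  obtain ⟨hm0, hm1⟩ := hm
  have hε : (0:ℝ) < (1-m)/2 := by linarith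
  have hmle : m ≤ (1+m)/2 := by linarith
  have hc : (0:ℝ) < Real.sqrt ((1-m)/2) := Real.sqrt_pos.2 hε
  have h := hasDerivAt_integral_of_dominated_loc_of_deriv_le (μ := volume)
      (F := fun s y => Real.sqrt (1 - s * Real.sin y ^ 2))
      (F' := fun s y => -(Real.sin y ^ 2) / (2 * Real.sqrt (1 - s * Real.sin y ^ 2)))
      (x₀ := m) (a := (0:ℝ)) (b := π/2)
      (bound := fun _ => 1 / (2 * Real.sqrt ((1-m)/2))) (s := Metric.ball m ((1-m)/2)) (Metric.ball_mem_nhds m hε)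
      (Filter.Eventually.of_forall fun s => (contSqrt s).aestronglyMeasurable)
      ((contSqrt m).intervalIntegrable _ _)
      ((contDE fun y => w_pos hm0 hm1 hmle y).aestronglyMeasurable)
      ?_ (_root_.intervalIntegrable_const) ?_
  · exact h.2
  · refine Filter.Eventually.of_forall fun y _ s hs => ?_
    have hsle := ball_mem_le hm1 hs
    have hw := w_pos hm0 hm1 hsle y
    have hlb := w_lb hm0 hm1 hsle y
    rw [Real.norm_eq_abs, abs_div, abs_neg, abs_of_nonneg (sq_nonneg _),
      abs_of_pos (by positivity)]
    apply div_le_div₀ (by positivity) (Real.sin_sq_le_one y) (by positivity)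
    have := Real.sqrt_le_sqrt hlb
    linarith
  · refine Filter.Eventually.of_forall fun y _ s hs => ?_
    exact hasDerivE y (w_pos hm0 hm1 (ball_mem_le hm1 hs) y)

set_option maxHeartbeats 1000000 in
lemma ellipticK_hasDeriv (hm : m ∈ Set.Ioo (0:ℝ) 1) :
    HasDerivAt ellipticK
      (∫ y in (0:ℝ)..(π/2), Real.sin y ^ 2 /
        (2 * ((1 - m * Real.sin y ^ 2) * Real.sqrt (1 - m * Real.sin y ^ 2)))) m := by
  obtain ⟨hm0, hm1⟩ := hm
  have hε : (0:ℝ) < (1-m)/2 := by linarith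
  have hmle : m ≤ (1+m)/2 := by linarith
  have hc : (0:ℝ) < Real.sqrt ((1-m)/2) := Real.sqrt_pos.2 hε
  have h := hasDerivAt_integral_of_dominated_loc_of_deriv_le (μ := volume)
      (F := fun s y => 1 / Real.sqrt (1 - s * Real.sin y ^ 2))
      (F' := fun s y => Real.sin y ^ 2 /
        (2 * ((1 - s * Real.sin y ^ 2) * Real.sqrt (1 - s * Real.sin y ^ 2))))
      (x₀ := m) (a := (0:ℝ)) (b := π/2)
      (bound := fun _ => 1 / (2 * (((1-m)/2) * Real.sqrt ((1-m)/2)))) (s := Metric.ball m ((1-m)/2)) (Metric.ball_mem_nhds m hε)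
      ?_ ((contInv fun y => w_pos hm0 hm1 hmle y).intervalIntegrable _ _)
      ((contDK fun y => w_pos hm0 hm1 hmle y).aestronglyMeasurable)
      ?_ (_root_.intervalIntegrable_const) ?_
  · exact h.2
  · filter_upwards [Metric.ball_mem_nhds m hε] with s hs
    exact (contInv fun y => w_pos hm0 hm1 (ball_mem_le hm1 hs) y).aestronglyMeasurable
  · refine Filter.Eventually.of_forall fun y _ s hs => ?_
    have hsle := ball_mem_le hm1 hs
    have hw := w_pos hm0 hm1 hsle y
    have hlb := w_lb hm0 hm1 hsle y
    have hsl := Real.sqrt_le_sqrt hlb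
    rw [Real.norm_eq_abs, abs_div, abs_of_nonneg (sq_nonneg _),
      abs_of_pos (by positivity)]
    apply div_le_div₀ (by positivity) (Real.sin_sq_le_one y) (by positivity)
    have h1 : ((1-m)/2) * Real.sqrt ((1-m)/2)
        ≤ (1 - s * Real.sin y ^ 2) * Real.sqrt (1 - s * Real.sin y ^ 2) := by
      apply mul_le_mul hlb hsl (Real.sqrt_nonneg _) (by linarith)
    linarith
  · refine Filter.Eventually.of_forall fun y _ s hs => ?_
    exact hasDerivK y (w_pos hm0 hm1 (ball_mem_le hm1 hs) y)

lemma ibp_deriv (hm0 : 0 < m) (hm1 : m < 1) (y : ℝ) :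
    HasDerivAt (fun y => Real.sin y * Real.cos y / Real.sqrt (1 - m * Real.sin y ^ 2))
      (((m - 1) / ((1 - m * Real.sin y ^ 2) * Real.sqrt (1 - m * Real.sin y ^ 2))
        + Real.sqrt (1 - m * Real.sin y ^ 2)) / m) y := by
  have hw : 0 < 1 - m * Real.sin y ^ 2 := w_pos hm0 hm1 (by linarith) y
  have hne : Real.sqrt (1 - m * Real.sin y ^ 2) ≠ 0 := ne_of_gt (Real.sqrt_pos.2 hw)
  have hsq : Real.sqrt (1 - m * Real.sin y ^ 2) * Real.sqrt (1 - m * Real.sin y ^ 2)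
      = 1 - m * Real.sin y ^ 2 := Real.mul_self_sqrt hw.le
  have hu : HasDerivAt (fun y => Real.sin y * Real.cos y)
      (Real.cos y * Real.cos y + Real.sin y * (-Real.sin y)) y :=
    (Real.hasDerivAt_sin y).mul (Real.hasDerivAt_cos y)
  have hinner : HasDerivAt (fun y => 1 - m * Real.sin y ^ 2)
      (-(m * (2 * Real.sin y ^ 1 * Real.cos y))) y :=
    (((Real.hasDerivAt_sin y).pow 2).const_mul m).const_sub 1
  have hv := (Real.hasDerivAt_sqrt (ne_of_gt hw)).comp y hinner
  have h := hu.div hv hne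
  refine h.congr_deriv ?_
  simp only [Function.comp_apply]
  rw [Real.sq_sqrt hw.le]
  generalize hT : Real.sqrt (1 - m * Real.sin y ^ 2) = t at hsq hne ⊢
  have hp : Real.cos y ^ 2 = 1 - Real.sin y ^ 2 := by
    nlinarith [Real.sin_sq_add_cos_sq y]
  field_simp
  have ha : (1:ℝ) - Real.sin y ^ 2 * m ≠ 0 := by linarith
  rw [div_add' _ _ _ ha, div_left_inj' ha]
  linear_combination (m*t^2 + m^2*Real.sin y^2) * hp + (m - m*Real.sin y^2 - 1) * hsq

lemma intJ (hm : m ∈ Set.Ioo (0:ℝ) 1) :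
    (∫ y in (0:ℝ)..(π/2),
        1 / ((1 - m * Real.sin y ^ 2) * Real.sqrt (1 - m * Real.sin y ^ 2)))
      = ellipticE m / (1 - m) := by
  obtain ⟨hm0, hm1⟩ := hm
  have hpos : ∀ y, 0 < 1 - m * Real.sin y ^ 2 := fun y => w_pos hm0 hm1 (by linarith) y
  have hcont1 : Continuous fun y =>
      (m - 1) / ((1 - m * Real.sin y ^ 2) * Real.sqrt (1 - m * Real.sin y ^ 2)) :=
    continuous_const.div ((contW m).mul (contSqrt m))
      fun y => (mul_pos (hpos y) (Real.sqrt_pos.2 (hpos y))).ne'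
  have hg : Continuous fun y =>
      ((m - 1) / ((1 - m * Real.sin y ^ 2) * Real.sqrt (1 - m * Real.sin y ^ 2))
        + Real.sqrt (1 - m * Real.sin y ^ 2)) / m :=
    (hcont1.add (contSqrt m)).div_const m
  have h0 := integral_eq_sub_of_hasDerivAt
    (f := fun y => Real.sin y * Real.cos y / Real.sqrt (1 - m * Real.sin y ^ 2))
    (a := (0:ℝ)) (b := π/2)
    (fun y _ => ibp_deriv hm0 hm1 y) (hg.intervalIntegrable _ _)
  simp only [Real.cos_pi_div_two, Real.sin_zero, mul_zero, zero_mul, zero_div, sub_zero] at h0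
  rw [intervalIntegral.integral_div, intervalIntegral.integral_add
      (hcont1.intervalIntegrable _ _) ((contSqrt m).intervalIntegrable _ _)] at h0
  have e1 : (∫ y in (0:ℝ)..(π/2),
      (m - 1) / ((1 - m * Real.sin y ^ 2) * Real.sqrt (1 - m * Real.sin y ^ 2)))
      = (m - 1) * ∫ y in (0:ℝ)..(π/2),
          1 / ((1 - m * Real.sin y ^ 2) * Real.sqrt (1 - m * Real.sin y ^ 2)) := by
    rw [← intervalIntegral.integral_const_mul]
    simp only [mul_one_div]
  rw [e1] at h0
  have hE : (∫ y in (0:ℝ)..(π/2), Real.sqrt (1 - m * Real.sin y ^ 2)) = ellipticE m := rfl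
  rw [hE] at h0
  have hm' : m ≠ 0 := hm0.ne'
  have h1 : (m - 1) * (∫ y in (0:ℝ)..(π/2),
      1 / ((1 - m * Real.sin y ^ 2) * Real.sqrt (1 - m * Real.sin y ^ 2))) + ellipticE m = 0 := by
    field_simp at h0
    linarith
  have hm1' : (1:ℝ) - m ≠ 0 := by linarith
  field_simp
  linarith

end MuRiccatiAux

open MuRiccatiAux in
/-- For every `m ∈ (0,1)`, the function `μ(m) = E(m)/K(m)` is differentiable at `m`
and satisfies the Riccati equation
`μ'(m) = (μ(m)² + 2(m−1)μ(m) − (m−1)) / (2m(m−1))`. -/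
theorem mu_riccati (m : ℝ) (hm : m ∈ Set.Ioo (0:ℝ) 1) :
    HasDerivAt (fun s => ellipticE s / ellipticK s)
      (((ellipticE m / ellipticK m) ^ 2 + 2 * (m - 1) * (ellipticE m / ellipticK m)
          - (m - 1)) / (2 * m * (m - 1))) m := by
  obtain ⟨hm0, hm1⟩ := hm
  have hpos : ∀ y, 0 < 1 - m * Real.sin y ^ 2 := fun y => w_pos hm0 hm1 (by linarith) y
  have hKpos : 0 < ellipticK m := by
    refine intervalIntegral_pos_of_pos ((contInv hpos).intervalIntegrable _ _)
      (fun y => by have := hpos y; positivity) (by linarith [Real.pi_pos])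
  -- derivative of E
  have hE := ellipticE_hasDeriv ⟨hm0, hm1⟩
  have hEeq : (∫ y in (0:ℝ)..(π/2),
      -(Real.sin y ^ 2) / (2 * Real.sqrt (1 - m * Real.sin y ^ 2)))
      = (ellipticE m - ellipticK m) / (2 * m) := by
    have pt : ∀ y : ℝ, -(Real.sin y ^ 2) / (2 * Real.sqrt (1 - m * Real.sin y ^ 2))
        = (Real.sqrt (1 - m * Real.sin y ^ 2) - 1 / Real.sqrt (1 - m * Real.sin y ^ 2))
            / (2 * m) := by
      intro y
      have hw := hpos y
      have hne : Real.sqrt (1 - m * Real.sin y ^ 2) ≠ 0 := ne_of_gt (Real.sqrt_pos.2 hw)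
      have hsq : Real.sqrt (1 - m * Real.sin y ^ 2) * Real.sqrt (1 - m * Real.sin y ^ 2)
          = 1 - m * Real.sin y ^ 2 := Real.mul_self_sqrt hw.le
      field_simp
      rw [Real.sq_sqrt (by linarith : (0:ℝ) ≤ 1 - Real.sin y ^ 2 * m)]
      ring
    rw [intervalIntegral.integral_congr (g := fun y =>
        (Real.sqrt (1 - m * Real.sin y ^ 2) - 1 / Real.sqrt (1 - m * Real.sin y ^ 2)) / (2 * m))
        (fun y _ => pt y)]
    rw [intervalIntegral.integral_div, intervalIntegral.integral_sub
        ((contSqrt m).intervalIntegrable _ _) ((contInv hpos).intervalIntegrable _ _)]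
    rfl
  rw [hEeq] at hE
  -- derivative of K
  have hK := ellipticK_hasDeriv ⟨hm0, hm1⟩
  have hKeq : (∫ y in (0:ℝ)..(π/2), Real.sin y ^ 2 /
      (2 * ((1 - m * Real.sin y ^ 2) * Real.sqrt (1 - m * Real.sin y ^ 2))))
      = (ellipticE m / (1 - m) - ellipticK m) / (2 * m) := by
    have pt : ∀ y : ℝ, Real.sin y ^ 2 /
        (2 * ((1 - m * Real.sin y ^ 2) * Real.sqrt (1 - m * Real.sin y ^ 2)))
        = (1 / ((1 - m * Real.sin y ^ 2) * Real.sqrt (1 - m * Real.sin y ^ 2))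
            - 1 / Real.sqrt (1 - m * Real.sin y ^ 2)) / (2 * m) := by
      intro y
      have hw := hpos y
      have hne : Real.sqrt (1 - m * Real.sin y ^ 2) ≠ 0 := ne_of_gt (Real.sqrt_pos.2 hw)
      have hsq : Real.sqrt (1 - m * Real.sin y ^ 2) * Real.sqrt (1 - m * Real.sin y ^ 2)
          = 1 - m * Real.sin y ^ 2 := Real.mul_self_sqrt hw.le
      field_simp
      rw [div_sub_one (by linarith : (1:ℝ) - Real.sin y ^ 2 * m ≠ 0), sub_sub_cancel, div_div]
    rw [intervalIntegral.integral_congr (g := fun y =>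
        (1 / ((1 - m * Real.sin y ^ 2) * Real.sqrt (1 - m * Real.sin y ^ 2))
          - 1 / Real.sqrt (1 - m * Real.sin y ^ 2)) / (2 * m)) (fun y _ => pt y)]
    rw [intervalIntegral.integral_div, intervalIntegral.integral_sub
        ((contInv3 hpos).intervalIntegrable _ _) ((contInv hpos).intervalIntegrable _ _)]
    rw [intJ ⟨hm0, hm1⟩]
    rfl
  rw [hKeq] at hK
  have hd := hE.div hK hKpos.ne'
  refine hd.congr_deriv ?_
  have hm' : m ≠ 0 := hm0.ne'
  have h1m : (1:ℝ) - m ≠ 0 := by linarith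
  have hm1' : m - 1 ≠ 0 := by linarith
  have hKne : ellipticK m ≠ 0 := hKpos.ne'
  field_simp
  ring
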